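/- The measure μ = m_1 + m_2 on the hyperbolic plane has linear growth: there exists c > 0 such that μ(B_h(w,s)) ≤ c·s for every point w in the upper half plane and every s > 0. -/
import Mathlib


open MeasureTheory Real Set

noncomputable section

/-- Open euclidean ball in `ℝ × ℝ` with center `c` and radius `r`. -/
def eBall (c : ℝ × ℝ) (r : ℝ) : Set (ℝ × ℝ) :=
  {p | (p.1 - c.1) ^ 2 + (p.2 - c.2) ^ 2 < r ^ 2}

/-- Open hyperbolic ball (upper half-plane model) with center `w` and radius `s`,
characterized via `cosh (d_h p w) = 1 + |p - w|² / (2 p₂ w₂)`. -/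
def hBall (w : ℝ × ℝ) (s : ℝ) : Set (ℝ × ℝ) :=
  {p | 0 < p.2 ∧ 1 + ((p.1 - w.1) ^ 2 + (p.2 - w.2) ^ 2) / (2 * p.2 * w.2) < Real.cosh s}

/-- The restriction to the upper half plane of the standard Gaussian measure on `ℝ²`. -/
def m1 : Measure (ℝ × ℝ) :=
  (volume.restrict {p : ℝ × ℝ | 0 < p.2}).withDensity
    (fun p => ENNReal.ofReal ((2 * π)⁻¹ * Real.exp (-(p.1 ^ 2 + p.2 ^ 2) / 2)))

/-- The region `A = {(x,y) : x > 1, 0 < y < 1/x}`. -/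
def regA : Set (ℝ × ℝ) := {p | 1 < p.1 ∧ 0 < p.2 ∧ p.2 < p.1⁻¹}

/-- Lebesgue measure restricted to `A`. -/
def m2 : Measure (ℝ × ℝ) := volume.restrict regA

/-- The measure `μ = m₁ + m₂`. -/
def mu : Measure (ℝ × ℝ) := m1 + m2

/-- The centered maximal function of a measure `ν` with respect to `μ`,
using hyperbolic balls. -/
def Mmax (μ ν : Measure (ℝ × ℝ)) (w : ℝ × ℝ) : ENNReal :=
  ⨆ (s : ℝ) (_ : 0 < s), ν (hBall w s) / μ (hBall w s)


-- Auxiliary lemmas ------------------------------------------------------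

lemma aux_log_lintegral {a b : ℝ} (ha : 0 < a) (hab : a ≤ b) :
    ∫⁻ y in Ioo a b, ENNReal.ofReal y⁻¹ = ENNReal.ofReal (Real.log b - Real.log a) := by
  have hb : 0 < b := lt_of_lt_of_le ha hab
  have hint : IntegrableOn (fun y : ℝ => y⁻¹) (Ioo a b) := by
    apply (ContinuousOn.integrableOn_Icc ?_).mono_set Ioo_subset_Icc_self
    exact ContinuousOn.inv₀ continuousOn_id fun y hy => ne_of_gt (lt_of_lt_of_le ha hy.1)
  have hnn : 0 ≤ᶠ[ae (volume.restrict (Ioo a b))] fun y : ℝ => y⁻¹ := by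
    filter_upwards [ae_restrict_mem measurableSet_Ioo] with y hy
    exact inv_nonneg.mpr (le_of_lt (ha.trans hy.1))
  rw [← ofReal_integral_eq_lintegral_ofReal hint hnn]
  congr 1
  rw [← integral_Ioc_eq_integral_Ioo, ← intervalIntegral.integral_of_le hab,
    integral_inv_of_pos ha hb, Real.log_div hb.ne' ha.ne']

lemma aux_gauss_lintegral :
    ∫⁻ x : ℝ, ENNReal.ofReal ((2 * π)⁻¹ * Real.exp (-x ^ 2 / 2)) =
      ENNReal.ofReal ((2 * π)⁻¹ * Real.sqrt (2 * π)) := by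
  have h1 : ∀ x : ℝ, -x ^ 2 / 2 = -(1/2 : ℝ) * x ^ 2 := fun x => by ring
  have hint : Integrable (fun x : ℝ => (2 * π)⁻¹ * Real.exp (-x ^ 2 / 2)) := by
    simp only [h1]
    exact (integrable_exp_neg_mul_sq (by norm_num)).const_mul _
  rw [← ofReal_integral_eq_lintegral_ofReal hint
    (Filter.Eventually.of_forall fun x => by positivity)]
  congr 1
  rw [integral_const_mul]
  congr 1
  simp only [h1]
  rw [integral_gaussian]
  rw [show π / (1/2:ℝ) = 2 * π by ring]

lemma aux_exp_bound {y : ℝ} (hy : 0 < y) :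
    Real.exp (-y ^ 2 / 2) ≤ Real.exp (-(1:ℝ) / 2) * y⁻¹ := by
  have hlog := Real.log_le_sub_one_of_pos hy
  have h2 : Real.exp (-y ^ 2 / 2 + Real.log y) ≤ Real.exp (-(1:ℝ) / 2) :=
    Real.exp_le_exp.mpr (by nlinarith [sq_nonneg (y - 1)])
  have h3 : Real.exp (-y ^ 2 / 2) * y ≤ Real.exp (-(1:ℝ) / 2) := by
    rwa [Real.exp_add, Real.exp_log hy] at h2
  rw [mul_comm, ← div_eq_inv_mul, le_div_iff₀ hy]
  linarith

lemma aux_hBall_subset {w : ℝ × ℝ} {s : ℝ} (hw : 0 < w.2) (hs : 0 < s) :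
    hBall w s ⊆ {p : ℝ × ℝ | p.2 ∈ Ioo (w.2 * Real.exp (-s)) (w.2 * Real.exp s)} := by
  rintro p ⟨hp2, hlt⟩
  have h2 : (0:ℝ) < 2 * p.2 * w.2 := by positivity
  have hD : (p.1 - w.1) ^ 2 + (p.2 - w.2) ^ 2 < (Real.cosh s - 1) * (2 * p.2 * w.2) := by
    have := (div_lt_iff₀ h2).mp
      (by linarith : ((p.1 - w.1) ^ 2 + (p.2 - w.2) ^ 2) / (2 * p.2 * w.2) < Real.cosh s - 1)
    linarith
  have hcosh := Real.cosh_eq s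
  have hee : Real.exp s * Real.exp (-s) = 1 := by
    rw [← Real.exp_add]; simp
  have hee2 : w.2 ^ 2 * (Real.exp s * Real.exp (-s)) = w.2 ^ 2 := by rw [hee, mul_one]
  have hfac : (p.2 - w.2 * Real.exp (-s)) * (p.2 - w.2 * Real.exp s) < 0 := by
    nlinarith [sq_nonneg (p.1 - w.1), hee2]
  have hab : w.2 * Real.exp (-s) < w.2 * Real.exp s :=
    mul_lt_mul_of_pos_left (Real.exp_lt_exp.mpr (by linarith)) hw
  constructor
  · by_contra h; push_neg at h; nlinarith
  · by_contra h; push_neg at h; nlinarith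

lemma aux_m1_strip {a b : ℝ} (ha : 0 < a) (hab : a ≤ b) :
    m1 {p : ℝ × ℝ | p.2 ∈ Ioo a b} ≤ ENNReal.ofReal (Real.log b - Real.log a) := by
  have hmeas : MeasurableSet {p : ℝ × ℝ | p.2 ∈ Ioo a b} :=
    measurableSet_Ioo.preimage measurable_snd
  have hsubH : {p : ℝ × ℝ | p.2 ∈ Ioo a b} ∩ {p : ℝ × ℝ | 0 < p.2}
      = {p : ℝ × ℝ | p.2 ∈ Ioo a b} :=
    inter_eq_left.mpr fun p hp => ha.trans hp.1
  have hset : {p : ℝ × ℝ | p.2 ∈ Ioo a b} = (univ : Set ℝ) ×ˢ Ioo a b := by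
    ext p; simp [Set.mem_prod]
  have hlog0 : 0 ≤ Real.log b - Real.log a :=
    sub_nonneg.mpr (Real.log_le_log ha hab)
  have key : m1 {p : ℝ × ℝ | p.2 ∈ Ioo a b}
      = ∫⁻ p in {p : ℝ × ℝ | p.2 ∈ Ioo a b},
          ENNReal.ofReal ((2 * π)⁻¹ * Real.exp (-(p.1 ^ 2 + p.2 ^ 2) / 2)) := by
    rw [m1, withDensity_apply _ hmeas, Measure.restrict_restrict hmeas, hsubH]
  rw [key]
  have step1 : ∫⁻ p in {p : ℝ × ℝ | p.2 ∈ Ioo a b},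
      ENNReal.ofReal ((2 * π)⁻¹ * Real.exp (-(p.1 ^ 2 + p.2 ^ 2) / 2))
      ≤ ∫⁻ p in {p : ℝ × ℝ | p.2 ∈ Ioo a b},
        ENNReal.ofReal ((2 * π)⁻¹ * Real.exp (-p.1 ^ 2 / 2)) *
          ENNReal.ofReal (Real.exp (-(1:ℝ) / 2) * p.2⁻¹) := by
    apply setLIntegral_mono' hmeas
    intro p hp
    rw [← ENNReal.ofReal_mul (by positivity)]
    apply ENNReal.ofReal_le_ofReal
    have hy : 0 < p.2 := ha.trans hp.1
    have hb := aux_exp_bound hy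
    have hsplit : Real.exp (-(p.1 ^ 2 + p.2 ^ 2) / 2)
        = Real.exp (-p.1 ^ 2 / 2) * Real.exp (-p.2 ^ 2 / 2) := by
      rw [← Real.exp_add]; ring_nf
    rw [hsplit]
    have h2 : (0:ℝ) ≤ (2 * π)⁻¹ * Real.exp (-p.1 ^ 2 / 2) := by positivity
    calc (2 * π)⁻¹ * (Real.exp (-p.1 ^ 2 / 2) * Real.exp (-p.2 ^ 2 / 2))
        = ((2 * π)⁻¹ * Real.exp (-p.1 ^ 2 / 2)) * Real.exp (-p.2 ^ 2 / 2) := by ring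
      _ ≤ ((2 * π)⁻¹ * Real.exp (-p.1 ^ 2 / 2)) * (Real.exp (-(1:ℝ) / 2) * p.2⁻¹) :=
          mul_le_mul_of_nonneg_left hb h2
      _ = (2 * π)⁻¹ * Real.exp (-p.1 ^ 2 / 2) * (Real.exp (-(1:ℝ) / 2) * p.2⁻¹) := by ring
  refine le_trans step1 ?_
  have hprod : ∫⁻ p in {p : ℝ × ℝ | p.2 ∈ Ioo a b},
      ENNReal.ofReal ((2 * π)⁻¹ * Real.exp (-p.1 ^ 2 / 2)) *
        ENNReal.ofReal (Real.exp (-(1:ℝ) / 2) * p.2⁻¹)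
      = (∫⁻ x : ℝ, ENNReal.ofReal ((2 * π)⁻¹ * Real.exp (-x ^ 2 / 2))) *
        ∫⁻ y in Ioo a b, ENNReal.ofReal (Real.exp (-(1:ℝ) / 2) * y⁻¹) := by
    rw [hset, Measure.volume_eq_prod, ← Measure.prod_restrict, Measure.restrict_univ]
    have hf : Measurable fun x : ℝ => ENNReal.ofReal ((2 * π)⁻¹ * Real.exp (-x ^ 2 / 2)) :=
      ENNReal.measurable_ofReal.comp (by fun_prop)
    have hg : Measurable fun y : ℝ => ENNReal.ofReal (Real.exp (-(1:ℝ) / 2) * y⁻¹) :=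
      ENNReal.measurable_ofReal.comp (measurable_inv.const_mul _)
    exact lintegral_prod_mul hf.aemeasurable hg.aemeasurable
  rw [hprod, aux_gauss_lintegral]
  have hy : ∫⁻ y in Ioo a b, ENNReal.ofReal (Real.exp (-(1:ℝ) / 2) * y⁻¹)
      = ENNReal.ofReal (Real.exp (-(1:ℝ) / 2)) * ENNReal.ofReal (Real.log b - Real.log a) := by
    simp_rw [ENNReal.ofReal_mul (le_of_lt (Real.exp_pos _))]
    rw [lintegral_const_mul _ (by fun_prop), aux_log_lintegral ha hab]
  rw [hy, ← mul_assoc, ← ENNReal.ofReal_mul (by positivity)]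
  have hK : (2 * π)⁻¹ * Real.sqrt (2 * π) * Real.exp (-(1:ℝ) / 2) ≤ 1 := by
    have h2pi : (1:ℝ) ≤ 2 * π := by nlinarith [Real.pi_gt_three]
    have hsq : Real.sqrt (2 * π) ≤ 2 * π := by
      nlinarith [Real.sq_sqrt (by linarith : (0:ℝ) ≤ 2 * π),
        Real.sqrt_nonneg (2 * π)]
    have hexp : Real.exp (-(1:ℝ) / 2) ≤ 1 :=
      Real.exp_le_one_iff.mpr (by norm_num)
    have h1 : (2 * π)⁻¹ * Real.sqrt (2 * π) ≤ 1 := by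
      rw [inv_mul_le_iff₀ (by linarith)]; linarith
    nlinarith [Real.exp_pos (-(1:ℝ)/2), mul_nonneg (inv_nonneg.mpr (by linarith : (0:ℝ) ≤ 2*π)) (Real.sqrt_nonneg (2*π))]
  calc ENNReal.ofReal ((2 * π)⁻¹ * Real.sqrt (2 * π) * Real.exp (-(1:ℝ) / 2)) *
        ENNReal.ofReal (Real.log b - Real.log a)
      ≤ ENNReal.ofReal 1 * ENNReal.ofReal (Real.log b - Real.log a) :=
        mul_le_mul_left (ENNReal.ofReal_le_ofReal hK) _
    _ = ENNReal.ofReal (Real.log b - Real.log a) := by rw [ENNReal.ofReal_one, one_mul]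

lemma aux_m2_strip {a b : ℝ} (ha : 0 < a) (hab : a ≤ b) :
    m2 {p : ℝ × ℝ | p.2 ∈ Ioo a b} ≤ ENNReal.ofReal (Real.log b - Real.log a) := by
  have hmeas : MeasurableSet {p : ℝ × ℝ | p.2 ∈ Ioo a b} :=
    measurableSet_Ioo.preimage measurable_snd
  rw [m2, Measure.restrict_apply hmeas]
  set T : Set (ℝ × ℝ) := {p | p.2 ∈ Ioo a b ∧ p.1 ∈ Ioo 1 p.2⁻¹} with hT
  set T' : Set (ℝ × ℝ) := {q | q.1 ∈ Ioo a b ∧ q.2 ∈ Ioo 1 q.1⁻¹} with hT'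
  have hTm : MeasurableSet T := by
    apply MeasurableSet.inter
    · exact measurableSet_Ioo.preimage measurable_snd
    · exact ((measurableSet_Ioi.preimage measurable_fst).inter
        (measurableSet_lt measurable_fst measurable_snd.inv))
  have hT'm : MeasurableSet T' := by
    apply MeasurableSet.inter
    · exact measurableSet_Ioo.preimage measurable_fst
    · exact ((measurableSet_Ioi.preimage measurable_snd).inter
        (measurableSet_lt measurable_snd measurable_fst.inv))
  have hsub : {p : ℝ × ℝ | p.2 ∈ Ioo a b} ∩ regA ⊆ T := by
    rintro p ⟨hp, h1, h2, h3⟩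
    refine ⟨hp, h1, ?_⟩
    have h4 : p.1 * p.2 < p.1 * p.1⁻¹ :=
      mul_lt_mul_of_pos_left h3 (by linarith)
    rw [mul_inv_cancel₀ (by linarith : p.1 ≠ 0)] at h4
    rw [inv_eq_one_div, lt_div_iff₀ h2]
    exact h4
  refine le_trans (measure_mono hsub) ?_
  have hswap : MeasurePreserving (Prod.swap : ℝ × ℝ → ℝ × ℝ) volume volume := by
    have := Measure.measurePreserving_swap (μ := (volume : Measure ℝ)) (ν := (volume : Measure ℝ))
    rwa [← Measure.volume_eq_prod] at this
  have hpre : (Prod.swap : ℝ × ℝ → ℝ × ℝ) ⁻¹' T = T' := rfl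
  have hvolT : volume T = volume T' := by
    rw [← hswap.measure_preimage hTm.nullMeasurableSet, hpre]
  rw [hvolT]
  have happ : volume T' = ∫⁻ y : ℝ, volume (Prod.mk y ⁻¹' T') := by
    rw [Measure.volume_eq_prod, Measure.prod_apply hT'm]
  have hslice : ∀ y : ℝ, volume (Prod.mk y ⁻¹' T')
      = Set.indicator (Ioo a b) (fun y : ℝ => ENNReal.ofReal (y⁻¹ - 1)) y := by
    intro y
    by_cases hy : y ∈ Ioo a b
    · rw [indicator_of_mem hy]
      have : Prod.mk y ⁻¹' T' = Ioo 1 y⁻¹ := by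
        ext x
        simp only [hT', mem_preimage, mem_setOf_eq, mem_Ioo]
        rw [mem_Ioo] at hy
        tauto
      rw [this, Real.volume_Ioo]
    · rw [indicator_of_notMem hy]
      have : Prod.mk y ⁻¹' T' = (∅ : Set ℝ) := by
        ext x
        simp only [hT', mem_preimage, mem_setOf_eq, mem_Ioo, mem_empty_iff_false, iff_false]
        rw [mem_Ioo] at hy
        tauto
      rw [this, measure_empty]
  rw [happ]
  simp_rw [hslice]
  rw [lintegral_indicator measurableSet_Ioo]
  refine le_trans ?_ (le_of_eq (aux_log_lintegral ha hab))
  apply setLIntegral_mono' measurableSet_Ioo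
  intro y hy
  exact ENNReal.ofReal_le_ofReal (by linarith)

theorem stmt16 :
    ∃ c : ℝ, 0 < c ∧ ∀ (w : ℝ × ℝ) (s : ℝ), 0 < w.2 → 0 < s →
      mu (hBall w s) ≤ ENNReal.ofReal (c * s) := by
  refine ⟨4, by norm_num, fun w s hw hs => ?_⟩
  have ha : 0 < w.2 * Real.exp (-s) := by positivity
  have hab : w.2 * Real.exp (-s) ≤ w.2 * Real.exp s :=
    le_of_lt (mul_lt_mul_of_pos_left (Real.exp_lt_exp.mpr (by linarith)) hw)
  have hlog : Real.log (w.2 * Real.exp s) - Real.log (w.2 * Real.exp (-s)) = 2 * s := by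
    rw [Real.log_mul hw.ne' (Real.exp_ne_zero _), Real.log_mul hw.ne' (Real.exp_ne_zero _),
      Real.log_exp, Real.log_exp]
    ring
  have hsub := aux_hBall_subset hw hs
  calc mu (hBall w s) = m1 (hBall w s) + m2 (hBall w s) := by
        rw [mu, Measure.add_apply]
    _ ≤ m1 {p : ℝ × ℝ | p.2 ∈ Ioo (w.2 * Real.exp (-s)) (w.2 * Real.exp s)} +
        m2 {p : ℝ × ℝ | p.2 ∈ Ioo (w.2 * Real.exp (-s)) (w.2 * Real.exp s)} :=
        add_le_add (measure_mono hsub) (measure_mono hsub)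
    _ ≤ ENNReal.ofReal (Real.log (w.2 * Real.exp s) - Real.log (w.2 * Real.exp (-s))) +
        ENNReal.ofReal (Real.log (w.2 * Real.exp s) - Real.log (w.2 * Real.exp (-s))) :=
        add_le_add (aux_m1_strip ha hab) (aux_m2_strip ha hab)
    _ = ENNReal.ofReal (4 * s) := by
        rw [hlog, ← ENNReal.ofReal_add (by linarith) (by linarith)]
        congr 1
        ring
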